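/- The four 'exceptional block' cylinder identities hold: I_A(3,7,5,1) = I_H(3,5,1,1), I_A(3,7,6,2) = I_H(3,5,1,2), I_A(6,2,3,7) = I_H(6,4,8,7), and I_A(6,2,4,8) = I_H(6,4,8,8). -/

import Mathlib

/-- The compactified translation `T̃ = k ∘ T ∘ k⁻¹`, `T(x) = x + 1`, on `[-1,1)`. -/
noncomputable def Ttilde (x : ℝ) : ℝ :=
  if x ≤ -1/2 then -2 - 1/x
  else if x ≤ 0 then (1 + 2*x) / (2 + 3*x)
  else 1 / (2 - x)

/-- The compactified inversion `S̃ = k ∘ S ∘ k⁻¹`, `S(x) = -1/x`, on `[-1,1)`. -/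
noncomputable def Stilde (x : ℝ) : ℝ :=
  if x < 0 then x + 1 else if x = 0 then -1 else x - 1

/-- The compactified inverse translation `T̃⁻¹ = k ∘ T⁻¹ ∘ k⁻¹` on `[-1,1)`. -/
noncomputable def Tinvtilde (x : ℝ) : ℝ :=
  if x ≤ 0 then -1 / (2 + x)
  else if x ≤ 1/2 then (1 - 2*x) / (3*x - 2)
  else 2 - 1/x

/-- The Artin map `f̃_A : [-1,1) → [-1,1)`. -/
noncomputable def fA (x : ℝ) : ℝ :=
  if x < -1/2 then Ttilde x
  else if x < 1/2 then Stilde x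
  else Tinvtilde x

/-- The Hurwitz map `f̃_H : [-1,1) → [-1,1)`. -/
noncomputable def fH (x : ℝ) : ℝ :=
  if x < -1/3 then Ttilde x
  else if x < 1/3 then Stilde x
  else Tinvtilde x

def J1 : Set ℝ := Set.Ico (-1) (-2/3)
def J2 : Set ℝ := Set.Ico (-2/3) (-1/2)
def J3 : Set ℝ := Set.Ico (-1/2) (-1/3)
def J4 : Set ℝ := Set.Ico (-1/3) 0
def J5 : Set ℝ := Set.Ico 0 (1/3)
def J6 : Set ℝ := Set.Ico (1/3) (1/2)
def J7 : Set ℝ := Set.Ico (1/2) (2/3)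
def J8 : Set ℝ := Set.Ico (2/3) 1

-- evaluation lemmas
lemma fA_neg {x : ℝ} (h1 : -1/2 ≤ x) (h2 : x < 0) : fA x = x + 1 := by
  unfold fA Stilde
  rw [if_neg (by linarith), if_pos (by linarith), if_pos h2]

lemma fA_pos {x : ℝ} (h1 : 0 < x) (h2 : x < 1/2) : fA x = x - 1 := by
  unfold fA Stilde
  rw [if_neg (by linarith), if_pos h2, if_neg (by linarith), if_neg (by linarith)]

lemma fA_T {x : ℝ} (h2 : x < -1/2) : fA x = -2 - 1/x := by
  unfold fA Ttilde
  rw [if_pos h2, if_pos (by linarith)]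

lemma fA_Ti {x : ℝ} (h1 : 1/2 < x) : fA x = 2 - 1/x := by
  unfold fA Tinvtilde
  rw [if_neg (by linarith), if_neg (by linarith), if_neg (by linarith), if_neg (by linarith)]

lemma fH_T1 {x : ℝ} (h1 : x ≤ -1/2) : fH x = -2 - 1/x := by
  unfold fH Ttilde
  rw [if_pos (by linarith), if_pos h1]

lemma fH_T2 {x : ℝ} (h1 : -1/2 < x) (h2 : x < -1/3) : fH x = (1 + 2*x) / (2 + 3*x) := by
  unfold fH Ttilde
  rw [if_pos h2, if_neg (by linarith), if_pos (by linarith)]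

lemma fH_neg {x : ℝ} (h1 : -1/3 ≤ x) (h2 : x < 0) : fH x = x + 1 := by
  unfold fH Stilde
  rw [if_neg (by linarith), if_pos (by linarith), if_pos h2]

lemma fH_pos {x : ℝ} (h1 : 0 < x) (h2 : x < 1/3) : fH x = x - 1 := by
  unfold fH Stilde
  rw [if_neg (by linarith), if_pos h2, if_neg (by linarith), if_neg (by linarith)]

lemma fH_Ti2 {x : ℝ} (h1 : 1/3 ≤ x) (h2 : x ≤ 1/2) : fH x = (1 - 2*x) / (3*x - 2) := by
  unfold fH Tinvtilde
  rw [if_neg (by linarith), if_neg (by linarith), if_neg (by linarith), if_pos h2]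

lemma fH_Ti3 {x : ℝ} (h1 : 1/2 < x) : fH x = 2 - 1/x := by
  unfold fH Tinvtilde
  rw [if_neg (by linarith), if_neg (by linarith), if_neg (by linarith), if_neg (by linarith)]

example : True := trivial

lemma eqA1 : J3 ∩ fA ⁻¹' J7 ∩ fA^[2] ⁻¹' J5 ∩ fA^[3] ⁻¹' J1 = Set.Ico (-1/2 : ℝ) (-2/5) := by
  ext x
  simp only [Set.mem_inter_iff, Set.mem_preimage, J1, J3, J5, J7, Set.mem_Ico,
    show fA^[2] = fun y => fA (fA y) from rfl, show fA^[3] = fun y => fA (fA (fA y)) from rfl]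
  constructor
  · rintro ⟨⟨⟨⟨h1, h2⟩, -⟩, -, h6⟩, -⟩
    refine ⟨h1, ?_⟩
    have e1 : fA x = x + 1 := fA_neg (by linarith) (by linarith)
    by_cases hc : x + 1 ≤ 1/2
    · linarith
    · have e2 : fA (fA x) = 2 - 1/(x+1) := by rw [e1]; exact fA_Ti (by linarith)
      rw [e2] at h6
      have hp : (0:ℝ) < x + 1 := by linarith
      have h7 : (5:ℝ)/3 < 1/(x+1) := by linarith
      rw [lt_div_iff₀ hp] at h7
      linarith
  · rintro ⟨h1, h2⟩
    have e1 : fA x = x + 1 := fA_neg (by linarith) (by linarith)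
    by_cases hc : x = -1/2
    · subst hc
      norm_num [fA, Ttilde, Stilde, Tinvtilde]
    · have hx : -1/2 < x := lt_of_le_of_ne h1 (Ne.symm hc)
      have hp : (0:ℝ) < x + 1 := by linarith
      have e2 : fA (fA x) = 2 - 1/(x+1) := by rw [e1]; exact fA_Ti (by linarith)
      have hub : 1/(x+1) < 2 := by rw [div_lt_iff₀ hp]; linarith
      have hlb : (5:ℝ)/3 < 1/(x+1) := by rw [lt_div_iff₀ hp]; linarith
      have e3 : fA (fA (fA x)) = 2 - 1/(x+1) - 1 := by
        rw [e2]; exact fA_pos (by linarith) (by linarith)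
      refine ⟨⟨⟨⟨by linarith, by linarith⟩, ?_⟩, ?_⟩, ?_⟩
      · rw [e1]; constructor <;> linarith
      · rw [e2]; constructor <;> linarith
      · rw [e3]; constructor <;> linarith

lemma eqH1 : J3 ∩ fH ⁻¹' J5 ∩ fH^[2] ⁻¹' J1 ∩ fH^[3] ⁻¹' J1 = Set.Ico (-1/2 : ℝ) (-2/5) := by
  ext x
  simp only [Set.mem_inter_iff, Set.mem_preimage, J1, J3, J5, Set.mem_Ico,
    show fH^[2] = fun y => fH (fH y) from rfl, show fH^[3] = fun y => fH (fH (fH y)) from rfl]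
  constructor
  · rintro ⟨⟨⟨⟨h1, h2⟩, -⟩, -⟩, -, h8⟩
    refine ⟨h1, ?_⟩
    by_cases hc : x = -1/2
    · linarith [hc ▸ h2]
    · have hx : -1/2 < x := lt_of_le_of_ne h1 (Ne.symm hc)
      have hd : (0:ℝ) < 2 + 3*x := by linarith
      have hn : (0:ℝ) < 1 + 2*x := by linarith
      have h1x : (0:ℝ) < 1 + x := by linarith
      have e1 : fH x = (1 + 2*x) / (2 + 3*x) := fH_T2 hx h2
      have hy1p : 0 < (1 + 2*x) / (2 + 3*x) := div_pos hn hd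
      have hy1u : (1 + 2*x) / (2 + 3*x) < 1/3 := by rw [div_lt_iff₀ hd]; linarith
      have e2 : fH (fH x) = (-1 - x) / (2 + 3*x) := by
        rw [e1, fH_pos hy1p hy1u]
        have hdne : (2:ℝ) + 3*x ≠ 0 := ne_of_gt hd
        rw [div_sub_one hdne]
        ring
      have hy2 : (-1 - x) / (2 + 3*x) ≤ -1/2 := by rw [div_le_iff₀ hd]; linarith
      have e3 : fH (fH (fH x)) = x / (1 + x) := by
        have hne1 : (-1:ℝ) - x ≠ 0 := ne_of_lt (by linarith)
        rw [e2, fH_T1 hy2, one_div_div]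
        field_simp
        ring
      rw [e3] at h8
      rw [div_lt_iff₀ h1x] at h8
      linarith
  · rintro ⟨h1, h2⟩
    by_cases hc : x = -1/2
    · subst hc
      norm_num [fH, Ttilde, Stilde, Tinvtilde]
    · have hx : -1/2 < x := lt_of_le_of_ne h1 (Ne.symm hc)
      have hd : (0:ℝ) < 2 + 3*x := by linarith
      have hn : (0:ℝ) < 1 + 2*x := by linarith
      have h1x : (0:ℝ) < 1 + x := by linarith
      have e1 : fH x = (1 + 2*x) / (2 + 3*x) := fH_T2 hx (by linarith)
      have hy1p : 0 < (1 + 2*x) / (2 + 3*x) := div_pos hn hd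
      have hy1u : (1 + 2*x) / (2 + 3*x) < 1/3 := by rw [div_lt_iff₀ hd]; linarith
      have e2 : fH (fH x) = (-1 - x) / (2 + 3*x) := by
        rw [e1, fH_pos hy1p hy1u]
        have hdne : (2:ℝ) + 3*x ≠ 0 := ne_of_gt hd
        rw [div_sub_one hdne]
        ring
      have hy2 : (-1 - x) / (2 + 3*x) ≤ -1/2 := by rw [div_le_iff₀ hd]; linarith
      have hy2l : -1 ≤ (-1 - x) / (2 + 3*x) := by rw [le_div_iff₀ hd]; linarith
      have hy2u : (-1 - x) / (2 + 3*x) < -2/3 := by rw [div_lt_iff₀ hd]; linarith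
      have e3 : fH (fH (fH x)) = x / (1 + x) := by
        have hne1 : (-1:ℝ) - x ≠ 0 := ne_of_lt (by linarith)
        rw [e2, fH_T1 hy2, one_div_div]
        field_simp
        ring
      refine ⟨⟨⟨⟨h1, by linarith⟩, ?_⟩, ?_⟩, ?_⟩
      · rw [e1]; exact ⟨le_of_lt hy1p, hy1u⟩
      · rw [e2]; exact ⟨hy2l, hy2u⟩
      · rw [e3]
        constructor
        · rw [le_div_iff₀ h1x]; linarith
        · rw [div_lt_iff₀ h1x]; linarith

lemma eqA2 : J3 ∩ fA ⁻¹' J7 ∩ fA^[2] ⁻¹' J6 ∩ fA^[3] ⁻¹' J2 = Set.Ico (-2/5 : ℝ) (-1/3) := by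
  ext x
  simp only [Set.mem_inter_iff, Set.mem_preimage, J2, J3, J6, J7, Set.mem_Ico,
    show fA^[2] = fun y => fA (fA y) from rfl, show fA^[3] = fun y => fA (fA (fA y)) from rfl]
  constructor
  · rintro ⟨⟨⟨⟨h1, h2⟩, -⟩, h5, -⟩, -⟩
    refine ⟨?_, h2⟩
    have e1 : fA x = x + 1 := fA_neg (by linarith) (by linarith)
    by_cases hc : x + 1 ≤ 1/2
    · have hx : x = -1/2 := by linarith
      subst hx
      norm_num [fA, Ttilde, Stilde, Tinvtilde] at h5
    · have e2 : fA (fA x) = 2 - 1/(x+1) := by rw [e1]; exact fA_Ti (by linarith)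
      rw [e2] at h5
      have hp : (0:ℝ) < x + 1 := by linarith
      have h7 : 1/(x+1) ≤ (5:ℝ)/3 := by linarith
      rw [div_le_iff₀ hp] at h7
      linarith
  · rintro ⟨h1, h2⟩
    have hp : (0:ℝ) < x + 1 := by linarith
    have e1 : fA x = x + 1 := fA_neg (by linarith) (by linarith)
    have e2 : fA (fA x) = 2 - 1/(x+1) := by rw [e1]; exact fA_Ti (by linarith)
    have hub : 1/(x+1) ≤ (5:ℝ)/3 := by rw [div_le_iff₀ hp]; linarith
    have hlb : (3:ℝ)/2 < 1/(x+1) := by rw [lt_div_iff₀ hp]; linarith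
    have e3 : fA (fA (fA x)) = 2 - 1/(x+1) - 1 := by
      rw [e2]; exact fA_pos (by linarith) (by linarith)
    refine ⟨⟨⟨⟨by linarith, h2⟩, ?_⟩, ?_⟩, ?_⟩
    · rw [e1]; constructor <;> linarith
    · rw [e2]; constructor <;> linarith
    · rw [e3]; constructor <;> linarith

lemma eqH2 : J3 ∩ fH ⁻¹' J5 ∩ fH^[2] ⁻¹' J1 ∩ fH^[3] ⁻¹' J2 = Set.Ico (-2/5 : ℝ) (-1/3) := by
  ext x
  simp only [Set.mem_inter_iff, Set.mem_preimage, J1, J2, J3, J5, Set.mem_Ico,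
    show fH^[2] = fun y => fH (fH y) from rfl, show fH^[3] = fun y => fH (fH (fH y)) from rfl]
  constructor
  · rintro ⟨⟨⟨⟨h1, h2⟩, -⟩, -⟩, h7, -⟩
    refine ⟨?_, h2⟩
    by_cases hc : x = -1/2
    · subst hc
      norm_num [fH, Ttilde, Stilde, Tinvtilde] at h7
    · have hx : -1/2 < x := lt_of_le_of_ne h1 (Ne.symm hc)
      have hd : (0:ℝ) < 2 + 3*x := by linarith
      have hn : (0:ℝ) < 1 + 2*x := by linarith
      have h1x : (0:ℝ) < 1 + x := by linarith
      have e1 : fH x = (1 + 2*x) / (2 + 3*x) := fH_T2 hx h2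
      have hy1p : 0 < (1 + 2*x) / (2 + 3*x) := div_pos hn hd
      have hy1u : (1 + 2*x) / (2 + 3*x) < 1/3 := by rw [div_lt_iff₀ hd]; linarith
      have e2 : fH (fH x) = (-1 - x) / (2 + 3*x) := by
        rw [e1, fH_pos hy1p hy1u]
        have hdne : (2:ℝ) + 3*x ≠ 0 := ne_of_gt hd
        rw [div_sub_one hdne]
        ring
      have hy2 : (-1 - x) / (2 + 3*x) ≤ -1/2 := by rw [div_le_iff₀ hd]; linarith
      have e3 : fH (fH (fH x)) = x / (1 + x) := by
        have hne1 : (-1:ℝ) - x ≠ 0 := ne_of_lt (by linarith)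
        rw [e2, fH_T1 hy2, one_div_div]
        field_simp
        ring
      rw [e3] at h7
      rw [le_div_iff₀ h1x] at h7
      linarith
  · rintro ⟨h1, h2⟩
    have hx : -1/2 < x := by linarith
    have hd : (0:ℝ) < 2 + 3*x := by linarith
    have hn : (0:ℝ) < 1 + 2*x := by linarith
    have h1x : (0:ℝ) < 1 + x := by linarith
    have e1 : fH x = (1 + 2*x) / (2 + 3*x) := fH_T2 hx h2
    have hy1p : 0 < (1 + 2*x) / (2 + 3*x) := div_pos hn hd
    have hy1u : (1 + 2*x) / (2 + 3*x) < 1/3 := by rw [div_lt_iff₀ hd]; linarith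
    have e2 : fH (fH x) = (-1 - x) / (2 + 3*x) := by
      rw [e1, fH_pos hy1p hy1u]
      have hdne : (2:ℝ) + 3*x ≠ 0 := ne_of_gt hd
      rw [div_sub_one hdne]
      ring
    have hy2 : (-1 - x) / (2 + 3*x) ≤ -1/2 := by rw [div_le_iff₀ hd]; linarith
    have hy2l : -1 ≤ (-1 - x) / (2 + 3*x) := by rw [le_div_iff₀ hd]; linarith
    have hy2u : (-1 - x) / (2 + 3*x) < -2/3 := by rw [div_lt_iff₀ hd]; linarith
    have e3 : fH (fH (fH x)) = x / (1 + x) := by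
      have hne1 : (-1:ℝ) - x ≠ 0 := ne_of_lt (by linarith)
      rw [e2, fH_T1 hy2, one_div_div]
      field_simp
      ring
    refine ⟨⟨⟨⟨by linarith, h2⟩, ?_⟩, ?_⟩, ?_⟩
    · rw [e1]; exact ⟨le_of_lt hy1p, hy1u⟩
    · rw [e2]; exact ⟨hy2l, hy2u⟩
    · rw [e3]
      constructor
      · rw [le_div_iff₀ h1x]; linarith
      · rw [div_lt_iff₀ h1x]; linarith

lemma eqA3 : J6 ∩ fA ⁻¹' J2 ∩ fA^[2] ⁻¹' J3 ∩ fA^[3] ⁻¹' J7 = Set.Ico (1/3 : ℝ) (2/5) := by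
  ext x
  simp only [Set.mem_inter_iff, Set.mem_preimage, J2, J3, J6, J7, Set.mem_Ico,
    show fA^[2] = fun y => fA (fA y) from rfl, show fA^[3] = fun y => fA (fA (fA y)) from rfl]
  constructor
  · rintro ⟨⟨⟨⟨h1, h2⟩, -⟩, -, h6⟩, -⟩
    refine ⟨h1, ?_⟩
    have hneg : x - 1 < 0 := by linarith
    have e1 : fA x = x - 1 := fA_pos (by linarith) h2
    have e2 : fA (fA x) = -2 - 1/(x-1) := by rw [e1]; exact fA_T (by linarith)
    rw [e2] at h6
    have h7 : (-5:ℝ)/3 < 1/(x-1) := by linarith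
    rw [lt_div_iff_of_neg hneg] at h7
    linarith
  · rintro ⟨h1, h2⟩
    have hneg : x - 1 < 0 := by linarith
    have e1 : fA x = x - 1 := fA_pos (by linarith) (by linarith)
    have e2 : fA (fA x) = -2 - 1/(x-1) := by rw [e1]; exact fA_T (by linarith)
    have hub : 1/(x-1) ≤ (-3:ℝ)/2 := by rw [div_le_iff_of_neg hneg]; linarith
    have hlb : (-5:ℝ)/3 < 1/(x-1) := by rw [lt_div_iff_of_neg hneg]; linarith
    have e3 : fA (fA (fA x)) = -2 - 1/(x-1) + 1 := by
      rw [e2]; exact fA_neg (by linarith) (by linarith)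
    refine ⟨⟨⟨⟨h1, by linarith⟩, ?_⟩, ?_⟩, ?_⟩
    · rw [e1]; constructor <;> linarith
    · rw [e2]; constructor <;> linarith
    · rw [e3]; constructor <;> linarith

lemma eqA4 : J6 ∩ fA ⁻¹' J2 ∩ fA^[2] ⁻¹' J4 ∩ fA^[3] ⁻¹' J8 = Set.Ico (2/5 : ℝ) (1/2) := by
  ext x
  simp only [Set.mem_inter_iff, Set.mem_preimage, J2, J4, J6, J8, Set.mem_Ico,
    show fA^[2] = fun y => fA (fA y) from rfl, show fA^[3] = fun y => fA (fA (fA y)) from rfl]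
  constructor
  · rintro ⟨⟨⟨⟨h1, h2⟩, -⟩, h5, -⟩, -⟩
    refine ⟨?_, h2⟩
    have hneg : x - 1 < 0 := by linarith
    have e1 : fA x = x - 1 := fA_pos (by linarith) h2
    have e2 : fA (fA x) = -2 - 1/(x-1) := by rw [e1]; exact fA_T (by linarith)
    rw [e2] at h5
    have h7 : 1/(x-1) ≤ (-5:ℝ)/3 := by linarith
    rw [div_le_iff_of_neg hneg] at h7
    linarith
  · rintro ⟨h1, h2⟩
    have hneg : x - 1 < 0 := by linarith
    have e1 : fA x = x - 1 := fA_pos (by linarith) (by linarith)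
    have e2 : fA (fA x) = -2 - 1/(x-1) := by rw [e1]; exact fA_T (by linarith)
    have hub : 1/(x-1) ≤ (-5:ℝ)/3 := by rw [div_le_iff_of_neg hneg]; linarith
    have hlb : (-2:ℝ) < 1/(x-1) := by rw [lt_div_iff_of_neg hneg]; linarith
    have e3 : fA (fA (fA x)) = -2 - 1/(x-1) + 1 := by
      rw [e2]; exact fA_neg (by linarith) (by linarith)
    refine ⟨⟨⟨⟨by linarith, h2⟩, ?_⟩, ?_⟩, ?_⟩
    · rw [e1]; constructor <;> linarith
    · rw [e2]; constructor <;> linarith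
    · rw [e3]; constructor <;> linarith

lemma eqH3 : J6 ∩ fH ⁻¹' J4 ∩ fH^[2] ⁻¹' J8 ∩ fH^[3] ⁻¹' J7 = Set.Ico (1/3 : ℝ) (2/5) := by
  ext x
  simp only [Set.mem_inter_iff, Set.mem_preimage, J4, J6, J7, J8, Set.mem_Ico,
    show fH^[2] = fun y => fH (fH y) from rfl, show fH^[3] = fun y => fH (fH (fH y)) from rfl]
  constructor
  · rintro ⟨⟨⟨⟨h1, h2⟩, -⟩, -⟩, -, h8⟩
    refine ⟨h1, ?_⟩
    have hd : 3*x - 2 < 0 := by linarith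
    have hn : (0:ℝ) < 1 - 2*x := by linarith
    have h1x : (0:ℝ) < 1 - x := by linarith
    have hx1 : x - 1 < 0 := by linarith
    have e1 : fH x = (1 - 2*x) / (3*x - 2) := fH_Ti2 h1 (by linarith)
    have hy1n : (1 - 2*x) / (3*x - 2) < 0 := div_neg_of_pos_of_neg hn hd
    have hy1l : -1/3 ≤ (1 - 2*x) / (3*x - 2) := by rw [le_div_iff_of_neg hd]; linarith
    have e2 : fH (fH x) = (x - 1) / (3*x - 2) := by
      have hdne : 3*x - 2 ≠ 0 := ne_of_lt hd
      rw [e1, fH_neg hy1l hy1n]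
      rw [div_add_one hdne]
      ring
    have hy2 : 1/2 < (x - 1) / (3*x - 2) := by rw [lt_div_iff_of_neg hd]; linarith
    have e3 : fH (fH (fH x)) = x / (1 - x) := by
      have hne : x - 1 ≠ 0 := ne_of_lt hx1
      have hne' : (1:ℝ) - x ≠ 0 := ne_of_gt h1x
      rw [e2, fH_Ti3 hy2, one_div_div]
      field_simp
      ring
    rw [e3] at h8
    rw [div_lt_iff₀ h1x] at h8
    linarith
  · rintro ⟨h1, h2⟩
    have hd : 3*x - 2 < 0 := by linarith
    have hn : (0:ℝ) < 1 - 2*x := by linarith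
    have h1x : (0:ℝ) < 1 - x := by linarith
    have hx1 : x - 1 < 0 := by linarith
    have e1 : fH x = (1 - 2*x) / (3*x - 2) := fH_Ti2 h1 (by linarith)
    have hy1n : (1 - 2*x) / (3*x - 2) < 0 := div_neg_of_pos_of_neg hn hd
    have hy1l : -1/3 ≤ (1 - 2*x) / (3*x - 2) := by rw [le_div_iff_of_neg hd]; linarith
    have e2 : fH (fH x) = (x - 1) / (3*x - 2) := by
      have hdne : 3*x - 2 ≠ 0 := ne_of_lt hd
      rw [e1, fH_neg hy1l hy1n]
      rw [div_add_one hdne]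
      ring
    have hy2 : 1/2 < (x - 1) / (3*x - 2) := by rw [lt_div_iff_of_neg hd]; linarith
    have hy2l : 2/3 ≤ (x - 1) / (3*x - 2) := by rw [le_div_iff_of_neg hd]; linarith
    have hy2u : (x - 1) / (3*x - 2) < 1 := by rw [div_lt_iff_of_neg hd]; linarith
    have e3 : fH (fH (fH x)) = x / (1 - x) := by
      have hne : x - 1 ≠ 0 := ne_of_lt hx1
      have hne' : (1:ℝ) - x ≠ 0 := ne_of_gt h1x
      rw [e2, fH_Ti3 hy2, one_div_div]
      field_simp
      ring
    refine ⟨⟨⟨⟨h1, by linarith⟩, ?_⟩, ?_⟩, ?_⟩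
    · rw [e1]; exact ⟨hy1l, hy1n⟩
    · rw [e2]; exact ⟨hy2l, hy2u⟩
    · rw [e3]
      constructor
      · rw [le_div_iff₀ h1x]; linarith
      · rw [div_lt_iff₀ h1x]; linarith

lemma eqH4 : J6 ∩ fH ⁻¹' J4 ∩ fH^[2] ⁻¹' J8 ∩ fH^[3] ⁻¹' J8 = Set.Ico (2/5 : ℝ) (1/2) := by
  ext x
  simp only [Set.mem_inter_iff, Set.mem_preimage, J4, J6, J8, Set.mem_Ico,
    show fH^[2] = fun y => fH (fH y) from rfl, show fH^[3] = fun y => fH (fH (fH y)) from rfl]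
  constructor
  · rintro ⟨⟨⟨⟨h1, h2⟩, -⟩, -⟩, h7, -⟩
    refine ⟨?_, h2⟩
    have hd : 3*x - 2 < 0 := by linarith
    have hn : (0:ℝ) < 1 - 2*x := by linarith
    have h1x : (0:ℝ) < 1 - x := by linarith
    have hx1 : x - 1 < 0 := by linarith
    have e1 : fH x = (1 - 2*x) / (3*x - 2) := fH_Ti2 h1 (by linarith)
    have hy1n : (1 - 2*x) / (3*x - 2) < 0 := div_neg_of_pos_of_neg hn hd
    have hy1l : -1/3 ≤ (1 - 2*x) / (3*x - 2) := by rw [le_div_iff_of_neg hd]; linarith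
    have e2 : fH (fH x) = (x - 1) / (3*x - 2) := by
      have hdne : 3*x - 2 ≠ 0 := ne_of_lt hd
      rw [e1, fH_neg hy1l hy1n]
      rw [div_add_one hdne]
      ring
    have hy2 : 1/2 < (x - 1) / (3*x - 2) := by rw [lt_div_iff_of_neg hd]; linarith
    have e3 : fH (fH (fH x)) = x / (1 - x) := by
      have hne : x - 1 ≠ 0 := ne_of_lt hx1
      have hne' : (1:ℝ) - x ≠ 0 := ne_of_gt h1x
      rw [e2, fH_Ti3 hy2, one_div_div]
      field_simp
      ring
    rw [e3] at h7
    rw [le_div_iff₀ h1x] at h7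
    linarith
  · rintro ⟨h1, h2⟩
    have hd : 3*x - 2 < 0 := by linarith
    have hn : (0:ℝ) < 1 - 2*x := by linarith
    have h1x : (0:ℝ) < 1 - x := by linarith
    have hx1 : x - 1 < 0 := by linarith
    have e1 : fH x = (1 - 2*x) / (3*x - 2) := fH_Ti2 (by linarith) (by linarith)
    have hy1n : (1 - 2*x) / (3*x - 2) < 0 := div_neg_of_pos_of_neg hn hd
    have hy1l : -1/3 ≤ (1 - 2*x) / (3*x - 2) := by rw [le_div_iff_of_neg hd]; linarith
    have e2 : fH (fH x) = (x - 1) / (3*x - 2) := by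
      have hdne : 3*x - 2 ≠ 0 := ne_of_lt hd
      rw [e1, fH_neg hy1l hy1n]
      rw [div_add_one hdne]
      ring
    have hy2 : 1/2 < (x - 1) / (3*x - 2) := by rw [lt_div_iff_of_neg hd]; linarith
    have hy2l : 2/3 ≤ (x - 1) / (3*x - 2) := by rw [le_div_iff_of_neg hd]; linarith
    have hy2u : (x - 1) / (3*x - 2) < 1 := by rw [div_lt_iff_of_neg hd]; linarith
    have e3 : fH (fH (fH x)) = x / (1 - x) := by
      have hne : x - 1 ≠ 0 := ne_of_lt hx1
      have hne' : (1:ℝ) - x ≠ 0 := ne_of_gt h1x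
      rw [e2, fH_Ti3 hy2, one_div_div]
      field_simp
      ring
    refine ⟨⟨⟨⟨by linarith, h2⟩, ?_⟩, ?_⟩, ?_⟩
    · rw [e1]; exact ⟨hy1l, hy1n⟩
    · rw [e2]; exact ⟨hy2l, hy2u⟩
    · rw [e3]
      constructor
      · rw [le_div_iff₀ h1x]; linarith
      · rw [div_lt_iff₀ h1x]; linarith

/-- The four "exceptional block" cylinder identities:
`I_A(3,7,5,1) = I_H(3,5,1,1)`, `I_A(3,7,6,2) = I_H(3,5,1,2)`,
`I_A(6,2,3,7) = I_H(6,4,8,7)`, `I_A(6,2,4,8) = I_H(6,4,8,8)`,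
where `I_A(ω₀,…,ω_n) = ⋂ᵢ f̃_A⁻ⁱ(J_{ωᵢ})` and similarly for `I_H`. -/
theorem exceptional_block_identities :
    (J3 ∩ fA ⁻¹' J7 ∩ fA^[2] ⁻¹' J5 ∩ fA^[3] ⁻¹' J1 =
      J3 ∩ fH ⁻¹' J5 ∩ fH^[2] ⁻¹' J1 ∩ fH^[3] ⁻¹' J1) ∧
    (J3 ∩ fA ⁻¹' J7 ∩ fA^[2] ⁻¹' J6 ∩ fA^[3] ⁻¹' J2 =
      J3 ∩ fH ⁻¹' J5 ∩ fH^[2] ⁻¹' J1 ∩ fH^[3] ⁻¹' J2) ∧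
    (J6 ∩ fA ⁻¹' J2 ∩ fA^[2] ⁻¹' J3 ∩ fA^[3] ⁻¹' J7 =
      J6 ∩ fH ⁻¹' J4 ∩ fH^[2] ⁻¹' J8 ∩ fH^[3] ⁻¹' J7) ∧
    (J6 ∩ fA ⁻¹' J2 ∩ fA^[2] ⁻¹' J4 ∩ fA^[3] ⁻¹' J8 =
      J6 ∩ fH ⁻¹' J4 ∩ fH^[2] ⁻¹' J8 ∩ fH^[3] ⁻¹' J8) := by
  
  exact ⟨by rw [eqA1, eqH1], by rw [eqA2, eqH2], by rw [eqA3, eqH3], by rw [eqA4, eqH4]⟩
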